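/- Fix an odd integer k = 2q+1 ≥ 5 and let I_k be the odd interior gadget. Then there exists a k-leaf root R of I_k such that m_R(t) = k−1 and m_R(b) = 4. -/

import Mathlib

open SimpleGraph

/-- A vertex of a graph is a leaf if it has exactly one neighbor. -/
def IsLeafVert {W : Type} (T : SimpleGraph W) (w : W) : Prop := ∃! u, T.Adj w u

/-- `T` (a finite tree on vertex type `W`) together with the injection `f` of the
vertices of `G` onto the leaves of `T` is a `k`-leaf root of `G`:  the leaves of `T`
are exactly the image of `f`, and two distinct vertices of `G` are adjacent iff
their distance in `T` is at most `k`. -/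
def IsLeafRoot {V W : Type} (G : SimpleGraph V) (k : ℕ)
    (T : SimpleGraph W) (f : V → W) : Prop :=
  Finite W ∧ T.IsTree ∧ Function.Injective f ∧
    (∀ w : W, (∃ v, f v = w) ↔ IsLeafVert T w) ∧
    (∀ u v : V, u ≠ v → (G.Adj u v ↔ T.dist (f u) (f v) ≤ k))

/-- `G` is a `k`-leaf power: it admits a `k`-leaf root. -/
def IsKLeafPower {V : Type} (G : SimpleGraph V) (k : ℕ) : Prop :=
  ∃ (W : Type) (T : SimpleGraph W) (f : V → W), IsLeafRoot G k T f

/-- `m_T(v)`: the minimum over all `u ≠ v` of the distance in the leaf root `T`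
between the leaves corresponding to `u` and `v`. -/
noncomputable def mval {V W : Type} (T : SimpleGraph W) (f : V → W) (v : V) : ℕ :=
  sInf {d | ∃ u, u ≠ v ∧ T.dist (f u) (f v) = d}

/-- A vertex has degree at least three. -/
def HasDegreeGEThree {W : Type} (T : SimpleGraph W) (w : W) : Prop :=
  ∃ a b c : W, a ≠ b ∧ a ≠ c ∧ b ≠ c ∧ T.Adj w a ∧ T.Adj w b ∧ T.Adj w c

/-- A spine of a tree: a path containing every vertex of degree at least 3.  A tree
having a spine is exactly a caterpillar subdivision. -/
def IsSpine {W : Type} (T : SimpleGraph W) {a b : W} (p : T.Walk a b) : Prop :=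
  p.IsPath ∧ ∀ w : W, HasDegreeGEThree T w → w ∈ p.support

/-- A linear `k`-leaf root: a `k`-leaf root whose tree is a caterpillar subdivision. -/
def IsLinearLeafRoot {V W : Type} (G : SimpleGraph V) (k : ℕ)
    (T : SimpleGraph W) (f : V → W) : Prop :=
  IsLeafRoot G k T f ∧ ∃ (a b : W) (p : T.Walk a b), IsSpine T p

/-- `G` is a linear `k`-leaf power: it admits a linear `k`-leaf root. -/
def IsLinearKLeafPower {V : Type} (G : SimpleGraph V) (k : ℕ) : Prop :=
  ∃ (W : Type) (T : SimpleGraph W) (f : V → W), IsLinearLeafRoot G k T f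

/-- A cycle of length `n` in `G`, given as an injective map from `ZMod n` with
consecutive images adjacent. -/
def IsCycleIn {V : Type} (G : SimpleGraph V) (n : ℕ) (f : ZMod n → V) : Prop :=
  Function.Injective f ∧ ∀ i : ZMod n, G.Adj (f i) (f (i + 1))

/-- `G` is chordal: every cycle of length at least 4 has a chord. -/
def Chordal {V : Type} (G : SimpleGraph V) : Prop :=
  ∀ n : ℕ, 4 ≤ n → ∀ f : ZMod n → V, IsCycleIn G n f →
    ∃ i j : ZMod n, j ≠ i ∧ j ≠ i + 1 ∧ j ≠ i - 1 ∧ G.Adj (f i) (f j)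

/-- `G` is strongly chordal: chordal, and every even cycle of length at least 6 has
an odd chord (a chord joining two vertices an odd distance apart along the cycle). -/
def StronglyChordal {V : Type} (G : SimpleGraph V) : Prop :=
  Chordal G ∧ ∀ n : ℕ, 6 ≤ n → Even n → ∀ f : ZMod n → V, IsCycleIn G n f →
    ∃ i j : ZMod n, Odd ((j - i).val) ∧ j ≠ i + 1 ∧ j ≠ i - 1 ∧ G.Adj (f i) (f j)

/-- Vertices of the odd interior gadget for `k = 2q+1`: `t`, `b`,
`x i` for `i : Fin q` (representing `x_{i+1}`), and `y i` for `i : Fin (q-1)`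
(representing `y_{i+2}`). -/
inductive IVert (q : ℕ) : Type where
  | t : IVert q
  | b : IVert q
  | x : Fin q → IVert q
  | y : Fin (q - 1) → IVert q

/-- The odd interior gadget `I_k` for odd `k = 2q+1 ≥ 5`: edges `t x_i` and `b x_i`
for all `1 ≤ i ≤ q`, `x_i x_j` for `i < j` (so `X` is a clique), `y_i x_j` for
`2 ≤ i ≤ j ≤ q`, and `b y_q`. -/
def oddGadget (q : ℕ) : SimpleGraph (IVert q) :=
  SimpleGraph.fromRel (fun u v => match u, v with
    | .t, .x _ => True
    | .b, .x _ => True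
    | .x i, .x j => i ≠ j
    | .y a, .x c => (a : ℕ) + 1 ≤ (c : ℕ)
    | .b, .y a => (a : ℕ) = q - 2
    | _, _ => False)



section ParentTree

variable {V : Type} (p : V → V) (rt : V) (d : V → ℕ)

/-- The graph generated by a parent function. -/
def parGraph : SimpleGraph V := SimpleGraph.fromRel (fun u v => u ≠ rt ∧ p u = v)

variable (hroot : p rt = rt) (hd : ∀ v, v ≠ rt → d (p v) + 1 = d v)

theorem parGraph_adj {u v : V} :
    (parGraph p rt).Adj u v ↔ u ≠ v ∧ ((u ≠ rt ∧ p u = v) ∨ (v ≠ rt ∧ p v = u)) := by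
  simp [parGraph, SimpleGraph.fromRel_adj]

include hd in
theorem par_ne {v : V} (hv : v ≠ rt) : p v ≠ v := by
  intro h
  have := hd v hv
  rw [h] at this
  omega

include hd in
theorem adj_par {v : V} (hv : v ≠ rt) : (parGraph p rt).Adj v (p v) := by
  rw [parGraph_adj]
  exact ⟨fun h => par_ne p rt d hd hv h.symm, Or.inl ⟨hv, rfl⟩⟩

include hroot hd in
theorem reach_root : ∀ v : V, (parGraph p rt).Reachable v rt := by
  intro v
  generalize hn : d v = n
  induction n using Nat.strong_induction_on generalizing v with
  | _ n ih =>
    subst hn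
    by_cases hv : v = rt
    · subst hv; exact Reachable.refl v
    · have h1 := hd v hv
      have h2 : (parGraph p rt).Reachable (p v) rt := ih (d (p v)) (by omega) (p v) rfl
      exact ((adj_par p rt d hd hv).reachable).trans h2

include hroot hd in
theorem parGraph_connected [Nonempty V] : (parGraph p rt).Connected := by
  refine ⟨?_⟩
  intro u v
  exact (reach_root p rt d hroot hd u).trans (reach_root p rt d hroot hd v).symm

include hroot hd in
theorem dist_iterate_le (n : ℕ) (v : V) : (parGraph p rt).dist v (p^[n] v) ≤ n := by
  induction n generalizing v with
  | zero => simp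
  | succ n ih =>
    by_cases hv : v = rt
    · have : p^[n+1] v = v := by
        subst hv
        exact Function.iterate_fixed hroot (n+1)
      rw [this, SimpleGraph.dist_self]
      omega
    · have hne : Nonempty V := ⟨v⟩
      have h1 : p^[n+1] v = p^[n] (p v) := Function.iterate_succ_apply p n v
      rw [h1]
      calc (parGraph p rt).dist v (p^[n] (p v))
          ≤ (parGraph p rt).dist v (p v) + (parGraph p rt).dist (p v) (p^[n] (p v)) :=
            (parGraph_connected p rt d hroot hd).dist_triangle
        _ ≤ 1 + n := by
            have h3 : (parGraph p rt).dist v (p v) ≤ 1 := by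
              simpa using SimpleGraph.dist_le
                (SimpleGraph.Walk.cons (adj_par p rt d hd hv) SimpleGraph.Walk.nil)
            have h4 := ih (p v)
            omega
        _ = n + 1 := by omega

include hroot hd in
theorem dist_le_meet [Nonempty V] {u v : V} {a b : ℕ} (h : p^[a] u = p^[b] v) :
    (parGraph p rt).dist u v ≤ a + b := by
  calc (parGraph p rt).dist u v
      ≤ (parGraph p rt).dist u (p^[a] u) + (parGraph p rt).dist (p^[a] u) v :=
        (parGraph_connected p rt d hroot hd).dist_triangle
    _ ≤ a + b := by
        have h1 := dist_iterate_le p rt d hroot hd a u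
        have h2 := dist_iterate_le p rt d hroot hd b v
        rw [h, SimpleGraph.dist_comm] at *
        omega

/-- Potential-based lower bound on distances. -/
theorem pot_walk_le {G : SimpleGraph V} (φ : V → ℕ)
    (hφ : ∀ a b : V, G.Adj a b → φ a ≤ φ b + 1) {u v : V} (w : G.Walk u v) :
    φ u ≤ φ v + w.length := by
  induction w with
  | nil => simp
  | cons hadj w' ih =>
    have h1 := hφ _ _ hadj
    simp only [SimpleGraph.Walk.length_cons]
    omega

theorem pot_dist_le {G : SimpleGraph V} (φ : V → ℕ)
    (hφ : ∀ a b : V, G.Adj a b → φ a ≤ φ b + 1) {u v : V} (h : G.Reachable u v) :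
    φ u ≤ φ v + G.dist u v := by
  obtain ⟨w, hw⟩ := h.exists_walk_length_eq_dist
  rw [← hw]
  exact pot_walk_le φ hφ w

include hroot hd in
theorem d_par_le (v : V) : d (p v) ≤ d v := by
  by_cases hv : v = rt
  · subst hv; rw [hroot]
  · have := hd v hv; omega

include hroot hd in
theorem d_iterate_le (n : ℕ) (v : V) : d (p^[n] v) ≤ d v := by
  induction n generalizing v with
  | zero => simp
  | succ n ih =>
    rw [Function.iterate_succ_apply]
    exact (ih (p v)).trans (d_par_le p rt d hroot hd v)

include hroot hd in
theorem no_par_cycle {v : V} (hv : v ≠ rt) (n : ℕ) : p^[n+1] v ≠ v := by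
  intro h
  have h1 : d (p^[n] (p v)) ≤ d (p v) := d_iterate_le p rt d hroot hd n (p v)
  rw [← Function.iterate_succ_apply, h] at h1
  have := hd v hv
  omega

include hroot hd in
theorem desc_step {u a : V} (ha : a ≠ rt) (hau : a ≠ u) :
    (∃ n, p^[n] (p a) = u) ↔ (∃ n, p^[n] a = u) := by
  constructor
  · rintro ⟨n, h⟩
    exact ⟨n+1, by rwa [Function.iterate_succ_apply]⟩
  · rintro ⟨n, h⟩
    cases n with
    | zero => exact absurd h hau
    | succ m => exact ⟨m, by rwa [Function.iterate_succ_apply] at h⟩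

include hroot hd in
theorem walk_invariant {G' : SimpleGraph V} (P : V → Prop)
    (hP : ∀ a b, G'.Adj a b → (P a ↔ P b)) {a b : V} (w : G'.Walk a b) : P a ↔ P b := by
  induction w with
  | nil => rfl
  | cons hadj w' ih => exact (hP _ _ hadj).trans ih

include hroot hd in
theorem parGraph_isBridge {u : V} (hu : u ≠ rt) :
    (parGraph p rt).IsBridge s(u, p u) := by
  rw [SimpleGraph.isBridge_iff]
  intro hreach
  obtain ⟨w⟩ := hreach
  have key : ∀ a b : V, ((parGraph p rt) \ fromEdgeSet {s(u, p u)}).Adj a b →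
      ((∃ n, p^[n] a = u) ↔ (∃ n, p^[n] b = u)) := by
    intro a b hab
    have h1 : (parGraph p rt).Adj a b := hab.1
    have h2 : ¬ (fromEdgeSet {s(u, p u)}).Adj a b := hab.2
    have hne : a ≠ b := h1.ne
    have h3 : s(a, b) ≠ s(u, p u) := by
      intro h
      exact h2 (by simp [SimpleGraph.fromEdgeSet_adj, h, hne])
    rw [parGraph_adj] at h1
    rcases h1.2 with ⟨ha, hpa⟩ | ⟨hb, hpb⟩
    · have hau : a ≠ u := by
        rintro rfl
        exact h3 (by rw [hpa])
      rw [← hpa]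
      exact (desc_step p rt d hroot hd ha hau).symm
    · have hbu : b ≠ u := by
        rintro rfl
        rw [← hpb] at h3
        exact h3 (Sym2.eq_swap)
      rw [← hpb]
      exact desc_step p rt d hroot hd hb hbu
  have hiff := walk_invariant p rt d hroot hd _ key w
  have hPu : ∃ n, p^[n] u = u := ⟨0, rfl⟩
  obtain ⟨n, hn⟩ := hiff.mp hPu
  rw [← Function.iterate_succ_apply] at hn
  exact no_par_cycle p rt d hroot hd hu n hn

include hroot hd in
theorem parGraph_isTree [Nonempty V] : (parGraph p rt).IsTree := by
  refine ⟨parGraph_connected p rt d hroot hd, ?_⟩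
  rw [SimpleGraph.isAcyclic_iff_forall_adj_isBridge]
  intro a b hab
  have h := (parGraph_adj p rt).mp hab
  rcases h.2 with ⟨ha, hpa⟩ | ⟨hb, hpb⟩
  · rw [← hpa]
    exact parGraph_isBridge p rt d hroot hd ha
  · rw [← hpb, Sym2.eq_swap]
    exact parGraph_isBridge p rt d hroot hd hb

end ParentTree

namespace Gadget

inductive Raw : Type where
  | main (c : ℕ)
  | xx (j h : ℕ)
  | yy (i h : ℕ)
  | qq (h : ℕ)
  | bb (h : ℕ)
deriving DecidableEq

def ell (q j : ℕ) : ℕ := if j = 1 then q - 1 else q + 1 - j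

def Valid (q : ℕ) : Raw → Prop
  | .main c => c ≤ 2*q
  | .xx j h => 1 ≤ j ∧ j ≤ q ∧ 1 ≤ h ∧ h ≤ ell q j
  | .yy i h => 2 ≤ i ∧ i + 1 ≤ q ∧ 1 ≤ h ∧ h ≤ q + i
  | .qq h => 1 ≤ h ∧ h ≤ 2*q
  | .bb h => 1 ≤ h ∧ h ≤ 2

def rpar (q : ℕ) : Raw → Raw
  | .main (c+1) => .main c
  | .main 0 => .main 0
  | .xx j 1 => .main (q + j)
  | .xx j (h+2) => .xx j (h+1)
  | .xx j 0 => .xx j 0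
  | .yy i 1 => .main (q + i)
  | .yy i (h+2) => .yy i (h+1)
  | .yy i 0 => .yy i 0
  | .qq 1 => .main (2*q)
  | .qq (h+2) => .qq (h+1)
  | .qq 0 => .qq 0
  | .bb 1 => .qq 1
  | .bb (h+2) => .bb (h+1)
  | .bb 0 => .bb 0

def dep (q : ℕ) : Raw → ℕ
  | .main c => c
  | .xx j h => q + j + h
  | .yy i h => q + i + h
  | .qq h => 2*q + h
  | .bb h => 2*q + 1 + h

def W (q : ℕ) : Type := {r : Raw // Valid q r}

theorem rpar_valid {q : ℕ} (hq : 2 ≤ q) {r : Raw} (hr : Valid q r) : Valid q (rpar q r) := by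
  cases r with
  | main c => rcases c with _ | c <;> simp_all [Valid, rpar] <;> omega
  | xx j h =>
    rcases h with _ | _ | h <;> simp_all [Valid, rpar, ell] <;> split_ifs at * <;> omega
  | yy i h => rcases h with _ | _ | h <;> simp_all [Valid, rpar] <;> omega
  | qq h => rcases h with _ | _ | h <;> simp_all [Valid, rpar] <;> omega
  | bb h => rcases h with _ | _ | h <;> simp_all [Valid, rpar] <;> omega

def parW (q : ℕ) (hq : 2 ≤ q) : W q → W q := fun w => ⟨rpar q w.1, rpar_valid hq w.2⟩

def rootW (q : ℕ) : W q := ⟨.main 0, by simp [Valid]⟩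

def depW (q : ℕ) : W q → ℕ := fun w => dep q w.1

theorem hrootW (q : ℕ) (hq : 2 ≤ q) : parW q hq (rootW q) = rootW q := rfl

theorem w_ne_iff {q : ℕ} {u v : W q} : u ≠ v ↔ u.1 ≠ v.1 := by
  constructor
  · intro h hh; exact h (Subtype.ext hh)
  · intro h hh; exact h (congrArg Subtype.val hh)

theorem hdW (q : ℕ) (hq : 2 ≤ q) :
    ∀ v : W q, v ≠ rootW q → depW q (parW q hq v) + 1 = depW q v := by
  rintro ⟨r, hr⟩ hne
  replace hne := w_ne_iff.mp hne
  simp only [rootW] at hne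
  simp only [Valid] at hr
  cases r with
  | main c =>
    rcases c with _ | c
    · exact absurd rfl hne
    · simp [depW, dep, parW, rpar]
  | xx j h =>
    rcases h with _ | _ | h
    · omega
    · simp [depW, dep, parW, rpar]
    · simp [depW, dep, parW, rpar]; omega
  | yy i h =>
    rcases h with _ | _ | h
    · omega
    · simp [depW, dep, parW, rpar]
    · simp [depW, dep, parW, rpar]; omega
  | qq h =>
    rcases h with _ | _ | h
    · omega
    · simp [depW, dep, parW, rpar]
    · simp [depW, dep, parW, rpar]; omega
  | bb h =>
    rcases h with _ | _ | h
    · omega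
    · simp [depW, dep, parW, rpar]
    · simp [depW, dep, parW, rpar]; omega

instance (q : ℕ) : Nonempty (W q) := ⟨rootW q⟩

/-- The leaf root tree. -/
def R (q : ℕ) (hq : 2 ≤ q) : SimpleGraph (W q) := parGraph (parW q hq) (rootW q)

theorem R_isTree (q : ℕ) (hq : 2 ≤ q) : (R q hq).IsTree :=
  parGraph_isTree (parW q hq) (rootW q) (depW q) (hrootW q hq) (hdW q hq)

theorem R_conn (q : ℕ) (hq : 2 ≤ q) : (R q hq).Connected :=
  parGraph_connected (parW q hq) (rootW q) (depW q) (hrootW q hq) (hdW q hq)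

theorem parW_iter_val (q : ℕ) (hq : 2 ≤ q) (n : ℕ) (w : W q) :
    ((parW q hq)^[n] w).1 = (rpar q)^[n] w.1 := by
  induction n generalizing w with
  | zero => rfl
  | succ n ih =>
    rw [Function.iterate_succ_apply, Function.iterate_succ_apply]
    exact ih (parW q hq w)

theorem meet_dist (q : ℕ) (hq : 2 ≤ q) (u v : W q) (a b : ℕ)
    (h : (rpar q)^[a] u.1 = (rpar q)^[b] v.1) : (R q hq).dist u v ≤ a + b := by
  apply dist_le_meet (parW q hq) (rootW q) (depW q) (hrootW q hq) (hdW q hq)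
  apply Subtype.ext
  rw [parW_iter_val, parW_iter_val]
  exact h

theorem iter_main (q : ℕ) : ∀ m c, (rpar q)^[m] (.main (c + m)) = .main c := by
  intro m
  induction m with
  | zero => intro c; rfl
  | succ m ih =>
    intro c
    have : c + (m+1) = (c + m) + 1 := by omega
    rw [this, Function.iterate_succ_apply]
    show (rpar q)^[m] (rpar q (.main (c + m + 1))) = _
    rw [show rpar q (.main (c+m+1)) = .main (c+m) from rfl]
    exact ih c

theorem iter_main' (q : ℕ) {m c : ℕ} (h : m ≤ c) :
    (rpar q)^[m] (.main c) = .main (c - m) := by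
  have : c = (c - m) + m := by omega
  conv_lhs => rw [this]
  rw [iter_main]

theorem iter_xx (q : ℕ) : ∀ h j, (rpar q)^[h+1] (.xx j (h+1)) = .main (q + j) := by
  intro h
  induction h with
  | zero => intro j; rfl
  | succ h ih =>
    intro j
    rw [Function.iterate_succ_apply]
    exact ih j

theorem iter_yy (q : ℕ) : ∀ h i, (rpar q)^[h+1] (.yy i (h+1)) = .main (q + i) := by
  intro h
  induction h with
  | zero => intro i; rfl
  | succ h ih =>
    intro i
    rw [Function.iterate_succ_apply]
    exact ih i

theorem iter_qq (q : ℕ) : ∀ h, (rpar q)^[h+1] (.qq (h+1)) = .main (2*q) := by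
  intro h
  induction h with
  | zero => rfl
  | succ h ih =>
    rw [Function.iterate_succ_apply]
    exact ih

theorem iter_bb2 (q : ℕ) : (rpar q)^[2] (.bb 2) = .qq 1 := rfl

theorem iter_bb3 (q : ℕ) : (rpar q)^[3] (.bb 2) = .main (2*q) := rfl

def dB (q : ℕ) : Raw → ℕ
  | .main c => 3 + (2*q - c)
  | .xx j h => 3 + (q - j) + h
  | .yy i h => 3 + (q - i) + h
  | .qq h => 1 + h
  | .bb h => 2 - h

def dYq (q : ℕ) : Raw → ℕ
  | .main c => 2*q + (2*q - c)
  | .xx j h => 2*q + (q - j) + h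
  | .yy i h => 2*q + (q - i) + h
  | .qq h => 2*q - h
  | .bb h => 2*q - 1 + h

def dY (q i₀ : ℕ) : Raw → ℕ
  | .main c => (q+i₀) + ((q+i₀) - c) + (c - (q+i₀))
  | .xx j h => (q+i₀) + ((i₀-j)+(j-i₀)) + h
  | .yy i h => if i = i₀ then (q+i₀) - h else (q+i₀) + ((i₀-i)+(i-i₀)) + h
  | .qq h => 2*q + h
  | .bb h => 2*q + 1 + h

theorem lip_of_step (q : ℕ) (hq : 2 ≤ q) (φ : Raw → ℕ)
    (hstep : ∀ r : Raw, Valid q r → r ≠ .main 0 →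
      φ (rpar q r) ≤ φ r + 1 ∧ φ r ≤ φ (rpar q r) + 1) :
    ∀ a b : W q, (R q hq).Adj a b → φ a.1 ≤ φ b.1 + 1 := by
  intro a b hab
  rw [R, parGraph_adj] at hab
  rcases hab.2 with ⟨ha, hpa⟩ | ⟨hb, hpb⟩
  · have ha' : a.1 ≠ .main 0 := by
      rw [w_ne_iff] at ha; exact ha
    have := (hstep a.1 a.2 ha').2
    rw [← hpa]
    exact this
  · have hb' : b.1 ≠ .main 0 := by
      rw [w_ne_iff] at hb; exact hb
    have := (hstep b.1 b.2 hb').1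
    rw [← hpb]
    exact this

theorem dist_ge_pot (q : ℕ) (hq : 2 ≤ q) (φ : Raw → ℕ)
    (hstep : ∀ r : Raw, Valid q r → r ≠ .main 0 →
      φ (rpar q r) ≤ φ r + 1 ∧ φ r ≤ φ (rpar q r) + 1)
    (u v : W q) (hv : φ v.1 = 0) : φ u.1 ≤ (R q hq).dist u v := by
  have := pot_dist_le (G := R q hq) (fun w => φ w.1) (lip_of_step q hq φ hstep)
    ((R_conn q hq).preconnected u v)
  simp only [hv] at this
  omega

theorem dT_step (q : ℕ) (hq : 2 ≤ q) : ∀ r : Raw, Valid q r → r ≠ .main 0 →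
    dep q (rpar q r) ≤ dep q r + 1 ∧ dep q r ≤ dep q (rpar q r) + 1 := by
  intro r hr hne
  have := hdW q hq ⟨r, hr⟩ (w_ne_iff.mpr hne)
  simp only [depW, parW] at this
  omega

theorem dB_step (q : ℕ) (hq : 2 ≤ q) : ∀ r : Raw, Valid q r → r ≠ .main 0 →
    dB q (rpar q r) ≤ dB q r + 1 ∧ dB q r ≤ dB q (rpar q r) + 1 := by
  intro r hr hne
  simp only [Valid] at hr
  cases r with
  | main c =>
    rcases c with _ | c
    · exact absurd rfl hne
    · simp [dB, rpar]; omega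
  | xx j h => rcases h with _ | _ | h <;> simp [dB, rpar] <;> omega
  | yy i h => rcases h with _ | _ | h <;> simp [dB, rpar] <;> omega
  | qq h => rcases h with _ | _ | h <;> simp [dB, rpar] <;> omega
  | bb h => rcases h with _ | _ | h <;> simp [dB, rpar] <;> omega

theorem dYq_step (q : ℕ) (hq : 2 ≤ q) : ∀ r : Raw, Valid q r → r ≠ .main 0 →
    dYq q (rpar q r) ≤ dYq q r + 1 ∧ dYq q r ≤ dYq q (rpar q r) + 1 := by
  intro r hr hne
  simp only [Valid] at hr
  cases r with
  | main c =>
    rcases c with _ | c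
    · exact absurd rfl hne
    · simp [dYq, rpar]; omega
  | xx j h => rcases h with _ | _ | h <;> simp [dYq, rpar] <;> omega
  | yy i h => rcases h with _ | _ | h <;> simp [dYq, rpar] <;> omega
  | qq h => rcases h with _ | _ | h <;> simp [dYq, rpar] <;> omega
  | bb h => rcases h with _ | _ | h <;> simp [dYq, rpar] <;> omega

theorem dY_step (q : ℕ) (hq : 2 ≤ q) (i₀ : ℕ) (hi : i₀ ≤ q) :
    ∀ r : Raw, Valid q r → r ≠ .main 0 →
    dY q i₀ (rpar q r) ≤ dY q i₀ r + 1 ∧ dY q i₀ r ≤ dY q i₀ (rpar q r) + 1 := by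
  intro r hr hne
  simp only [Valid] at hr
  cases r with
  | main c =>
    rcases c with _ | c
    · exact absurd rfl hne
    · simp [dY, rpar]; omega
  | xx j h => rcases h with _ | _ | h <;> simp [dY, rpar] <;> omega
  | yy i h =>
    rcases h with _ | _ | h <;> simp [dY, rpar] <;> split_ifs <;> simp_all <;> omega
  | qq h => rcases h with _ | _ | h <;> simp [dY, rpar] <;> omega
  | bb h => rcases h with _ | _ | h <;> simp [dY, rpar] <;> omega

def tag : Raw → ℕ
  | .main _ => 0 | .xx _ _ => 1 | .yy _ _ => 2 | .qq _ => 3 | .bb _ => 4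

def a1 : Raw → ℕ
  | .main c => c | .xx j _ => j | .yy i _ => i | .qq h => h | .bb h => h

def a2 : Raw → ℕ
  | .main _ => 0 | .xx _ h => h | .yy _ h => h | .qq _ => 0 | .bb _ => 0

theorem raw_eq_of (r r' : Raw) (h0 : tag r = tag r') (h1 : a1 r = a1 r')
    (h2 : a2 r = a2 r') : r = r' := by
  cases r <;> cases r' <;> simp_all [tag, a1, a2]

theorem tag_lt (r : Raw) : tag r < 5 := by cases r <;> simp [tag]

theorem a1_le {q : ℕ} (hq : 2 ≤ q) {r : Raw} (hr : Valid q r) : a1 r < 2*q + 1 := by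
  cases r <;> simp_all [Valid, a1] <;> omega

theorem a2_le {q : ℕ} (hq : 2 ≤ q) {r : Raw} (hr : Valid q r) : a2 r < 2*q + 1 := by
  cases r <;> simp_all [Valid, a2, ell] <;> first | omega | (split_ifs at * <;> omega)

theorem W_finite (q : ℕ) (hq : 2 ≤ q) : Finite (W q) := by
  apply Finite.of_injective (fun w : W q =>
    ((⟨tag w.1, tag_lt w.1⟩ : Fin 5), (⟨a1 w.1, a1_le hq w.2⟩ : Fin (2*q+1)),
      (⟨a2 w.1, a2_le hq w.2⟩ : Fin (2*q+1))))
  intro u v h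
  simp only [Prod.mk.injEq, Fin.mk.injEq] at h
  exact Subtype.ext (raw_eq_of u.1 v.1 h.1 h.2.1 h.2.2)

/-- The leaf map. -/
def fraw (q : ℕ) : IVert q → Raw
  | .t => .main 0
  | .b => .bb 2
  | .x j => .xx (j.val+1) (ell q (j.val+1))
  | .y a => if a.val + 2 = q then .qq (2*q) else .yy (a.val+2) (q + (a.val+2))

theorem ell_pos {q : ℕ} (hq : 2 ≤ q) {j : ℕ} (h1 : 1 ≤ j) (h2 : j ≤ q) :
    1 ≤ ell q j ∧ ell q j ≤ q - 1 := by
  simp [ell]; split_ifs <;> omega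

theorem fraw_valid (q : ℕ) (hq : 2 ≤ q) (v : IVert q) : Valid q (fraw q v) := by
  cases v with
  | t => simp [fraw, Valid]
  | b => simp [fraw, Valid]
  | x j =>
    have hj := j.2
    have := ell_pos hq (j := j.val+1) (by omega) (by omega)
    simp [fraw, Valid]
    omega
  | y a =>
    have ha := a.2
    by_cases h : a.val + 2 = q <;> simp [fraw, h, Valid] <;> omega

def fW (q : ℕ) (hq : 2 ≤ q) : IVert q → W q := fun v => ⟨fraw q v, fraw_valid q hq v⟩

def graw (q : ℕ) (hq : 2 ≤ q) : Raw → IVert q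
  | .main _ => .t
  | .bb _ => .b
  | .xx j _ => if hj : j - 1 < q then .x ⟨j-1, hj⟩ else .t
  | .yy i _ => if hi : i - 2 < q - 1 then .y ⟨i-2, hi⟩ else .t
  | .qq _ => if h2 : q - 2 < q - 1 then .y ⟨q-2, h2⟩ else .t

theorem graw_fraw (q : ℕ) (hq : 2 ≤ q) (v : IVert q) : graw q hq (fraw q v) = v := by
  cases v with
  | t => rfl
  | b => rfl
  | x j =>
    have hj := j.2
    simp only [fraw, graw]
    rw [dif_pos (by omega)]
    congr 1
  | y a =>
    have ha := a.2
    by_cases h : a.val + 2 = q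
    · simp only [fraw, if_pos h, graw]
      rw [dif_pos (by omega)]
      congr 1
      exact Fin.ext (by simp; omega)
    · simp only [fraw, if_neg h, graw]
      rw [dif_pos (by omega)]
      congr 1

theorem fW_inj (q : ℕ) (hq : 2 ≤ q) : Function.Injective (fW q hq) := by
  intro u v h
  have h' : fraw q u = fraw q v := congrArg Subtype.val h
  have := congrArg (graw q hq) h'
  rwa [graw_fraw, graw_fraw] at this

theorem R_adj_iff (q : ℕ) (hq : 2 ≤ q) {u v : W q} :
    (R q hq).Adj u v ↔ u.1 ≠ v.1 ∧
      ((u.1 ≠ .main 0 ∧ rpar q u.1 = v.1) ∨ (v.1 ≠ .main 0 ∧ rpar q v.1 = u.1)) := by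
  rw [R, parGraph_adj]
  constructor
  · rintro ⟨h1, h2⟩
    refine ⟨w_ne_iff.mp h1, ?_⟩
    rcases h2 with ⟨ha, hb⟩ | ⟨ha, hb⟩
    · exact Or.inl ⟨w_ne_iff.mp ha, congrArg Subtype.val hb⟩
    · exact Or.inr ⟨w_ne_iff.mp ha, congrArg Subtype.val hb⟩
  · rintro ⟨h1, h2⟩
    refine ⟨w_ne_iff.mpr h1, ?_⟩
    rcases h2 with ⟨ha, hb⟩ | ⟨ha, hb⟩
    · exact Or.inl ⟨w_ne_iff.mpr ha, Subtype.ext hb⟩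
    · exact Or.inr ⟨w_ne_iff.mpr ha, Subtype.ext hb⟩

theorem leaf_of_no_children (q : ℕ) (hq : 2 ≤ q) (L : W q) (hLr : L.1 ≠ .main 0)
    (hnc : ∀ u : W q, u.1 ≠ .main 0 → rpar q u.1 ≠ L.1) :
    IsLeafVert (R q hq) L := by
  refine ⟨parW q hq L, adj_par (parW q hq) (rootW q) (depW q) (hdW q hq)
    (by rw [w_ne_iff]; exact hLr), ?_⟩
  intro u hu
  rw [R_adj_iff] at hu
  rcases hu.2 with ⟨h1, h2⟩ | ⟨h1, h2⟩
  · exact Subtype.ext h2.symm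
  · exact absurd h2 (hnc u h1)

theorem not_leaf_two (q : ℕ) (hq : 2 ≤ q) (w u1 u2 : W q)
    (h1 : (R q hq).Adj w u1) (h2 : (R q hq).Adj w u2) (hne : u1 ≠ u2) :
    ¬ IsLeafVert (R q hq) w := by
  rintro ⟨u, _, huniq⟩
  exact hne ((huniq u1 h1).trans (huniq u2 h2).symm)

theorem t_is_leaf (q : ℕ) (hq : 2 ≤ q) : IsLeafVert (R q hq) (rootW q) := by
  refine ⟨⟨.main 1, by simp [Valid]; omega⟩, ?_, ?_⟩
  · show (R q hq).Adj (rootW q) ⟨.main 1, _⟩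
    refine (R_adj_iff q hq).mpr ?_
    refine ⟨by simp [rootW], Or.inr ⟨by simp, rfl⟩⟩
  · rintro ⟨r, hr⟩ hu
    replace hu := (R_adj_iff q hq).mp hu
    rcases hu.2 with ⟨h1, h2⟩ | ⟨h1, h2⟩
    · exact absurd rfl h1
    · simp only [Valid] at hr
      apply Subtype.ext
      simp only
      cases r with
      | main c =>
        rcases c with _ | c
        · exact absurd rfl h1
        · simp only [rpar, rootW, Raw.main.injEq] at h2
          simp only [Raw.main.injEq]
          omega
      | xx j h =>
        rcases h with _ | _ | h <;> simp_all [rpar, rootW] <;> omega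
      | yy i h =>
        rcases h with _ | _ | h <;> simp_all [rpar, rootW] <;> omega
      | qq h =>
        rcases h with _ | _ | h <;> simp_all [rpar, rootW] <;> omega
      | bb h =>
        rcases h with _ | _ | h <;> simp_all [rpar, rootW]

theorem adj_child (q : ℕ) (hq : 2 ≤ q) (w u : W q) (hu : u.1 ≠ .main 0)
    (hp : rpar q u.1 = w.1) (hne : w.1 ≠ u.1) : (R q hq).Adj w u := by
  rw [R_adj_iff]
  exact ⟨hne, Or.inr ⟨hu, hp⟩⟩

theorem adj_parent (q : ℕ) (hq : 2 ≤ q) (w : W q) (hw : w.1 ≠ .main 0) :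
    (R q hq).Adj w (parW q hq w) :=
  adj_par (parW q hq) (rootW q) (depW q) (hdW q hq) (by rw [w_ne_iff]; exact hw)

/-- An internal vertex with a valid child is not a leaf. -/
theorem not_leaf_internal (q : ℕ) (hq : 2 ≤ q) (w u : W q) (hw : w.1 ≠ .main 0)
    (hu : u.1 ≠ .main 0) (hp : rpar q u.1 = w.1) :
    ¬ IsLeafVert (R q hq) w := by
  have hdw := hdW q hq w (by rw [w_ne_iff]; exact hw)
  have hdu := hdW q hq u (by rw [w_ne_iff]; exact hu)
  have hdpu : depW q (parW q hq u) = depW q w := by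
    simp only [parW, depW, hp]
  have hne2 : w.1 ≠ u.1 := by
    intro h
    have : depW q w = depW q u := by simp only [depW, h]
    omega
  apply not_leaf_two q hq w (parW q hq w) u (adj_parent q hq w hw)
    (adj_child q hq w u hu hp hne2)
  intro h
  have : depW q (parW q hq w) = depW q u := by rw [h]
  omega

theorem leaf_iff (q : ℕ) (hq : 2 ≤ q) (w : W q) :
    (∃ v, fW q hq v = w) ↔ IsLeafVert (R q hq) w := by
  obtain ⟨r, hr⟩ := w
  have hrv := hr
  simp only [Valid] at hrv
  cases r with
  | main c =>
    rcases Nat.eq_zero_or_pos c with hc | hc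
    · subst hc
      exact iff_of_true ⟨.t, rfl⟩ (t_is_leaf q hq)
    · apply iff_of_false
      · rintro ⟨v, hv⟩
        have hv' := congrArg Subtype.val hv
        cases v with
        | t => simp only [fW, fraw, Raw.main.injEq] at hv'; omega
        | b => simp [fW, fraw] at hv'
        | x j => simp [fW, fraw] at hv'
        | y a => simp only [fW, fraw] at hv'; split_ifs at hv' <;> simp at hv'
      · rcases Nat.lt_or_ge c (2*q) with hc2 | hc2
        · refine not_leaf_internal q hq ⟨.main c, hr⟩ ⟨.main (c+1), by simp [Valid]; omega⟩
            ?_ (by simp) rfl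
          simp only [ne_eq, Raw.main.injEq]; omega
        · have hc3 : c = 2*q := by omega
          subst hc3
          refine not_leaf_internal q hq ⟨.main (2*q), hr⟩ ⟨.qq 1, by simp [Valid]; omega⟩
            ?_ (by simp) rfl
          simp only [ne_eq, Raw.main.injEq]; omega
  | xx j h =>
    rcases Nat.lt_or_ge h (ell q j) with hh | hh
    · apply iff_of_false
      · rintro ⟨v, hv⟩
        have hv' := congrArg Subtype.val hv
        cases v with
        | t => simp [fW, fraw] at hv'
        | b => simp [fW, fraw] at hv'
        | x j' =>
          simp only [fW, fraw, Raw.xx.injEq] at hv'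
          obtain ⟨h1, h2⟩ := hv'
          subst h1
          omega
        | y a => simp only [fW, fraw] at hv'; split_ifs at hv' <;> simp at hv'
      · have hch : Valid q (.xx j (h+1)) := by
          simp only [Valid]; omega
        refine not_leaf_internal q hq ⟨.xx j h, hr⟩ ⟨.xx j (h+1), hch⟩ (by simp) (by simp) ?_
        show rpar q (.xx j (h+1)) = .xx j h
        rcases hrv with ⟨-, -, h1, -⟩
        rcases h with _ | h
        · omega
        · rfl
    · have hh2 : h = ell q j := by omega
      subst hh2
      apply iff_of_true
      · refine ⟨.x ⟨j-1, by omega⟩, ?_⟩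
        apply Subtype.ext
        simp only [fW, fraw]
        have : j - 1 + 1 = j := by omega
        rw [this]
      · apply leaf_of_no_children q hq _ (by simp)
        rintro ⟨r', hr'⟩ hu hpu
        simp only at hpu hu
        cases r' with
        | main c' => rcases c' with _ | c' <;> simp [rpar] at hpu hu
        | xx j' h' =>
          simp only [Valid] at hr'
          rcases h' with _ | _ | h'
          · omega
          · simp [rpar] at hpu
          · simp only [rpar, Raw.xx.injEq] at hpu
            obtain ⟨rfl, h2⟩ := hpu
            omega
        | yy i' h' =>
          simp only [Valid] at hr'
          rcases h' with _ | _ | h' <;> simp [rpar] at hpu <;> omega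
        | qq h' =>
          simp only [Valid] at hr'
          rcases h' with _ | _ | h' <;> simp [rpar] at hpu <;> omega
        | bb h' =>
          simp only [Valid] at hr'
          rcases h' with _ | _ | h' <;> simp [rpar] at hpu <;> omega
  | yy i h =>
    rcases Nat.lt_or_ge h (q + i) with hh | hh
    · apply iff_of_false
      · rintro ⟨v, hv⟩
        have hv' := congrArg Subtype.val hv
        cases v with
        | t => simp [fW, fraw] at hv'
        | b => simp [fW, fraw] at hv'
        | x j' => simp [fW, fraw] at hv'
        | y a =>
          simp only [fW, fraw] at hv'
          split_ifs at hv' <;> simp only [Raw.yy.injEq] at hv' <;> omega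
      · have hch : Valid q (.yy i (h+1)) := by
          simp only [Valid]; omega
        refine not_leaf_internal q hq ⟨.yy i h, hr⟩ ⟨.yy i (h+1), hch⟩ (by simp) (by simp) ?_
        show rpar q (.yy i (h+1)) = .yy i h
        rcases h with _ | h
        · omega
        · rfl
    · have hh2 : h = q + i := by omega
      subst hh2
      apply iff_of_true
      · refine ⟨.y ⟨i-2, by omega⟩, ?_⟩
        apply Subtype.ext
        simp only [fW, fraw]
        rw [if_neg (by omega)]
        simp only [Raw.yy.injEq]
        omega
      · apply leaf_of_no_children q hq _ (by simp)
        rintro ⟨r', hr'⟩ hu hpu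
        simp only at hpu hu
        cases r' with
        | main c' => rcases c' with _ | c' <;> simp [rpar] at hpu hu
        | xx j' h' =>
          simp only [Valid] at hr'
          rcases h' with _ | _ | h' <;> simp [rpar] at hpu <;> omega
        | yy i' h' =>
          simp only [Valid] at hr'
          rcases h' with _ | _ | h'
          · omega
          · simp [rpar] at hpu
          · simp only [rpar, Raw.yy.injEq] at hpu
            obtain ⟨rfl, h2⟩ := hpu
            omega
        | qq h' =>
          simp only [Valid] at hr'
          rcases h' with _ | _ | h' <;> simp [rpar] at hpu <;> omega
        | bb h' =>
          simp only [Valid] at hr'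
          rcases h' with _ | _ | h' <;> simp [rpar] at hpu <;> omega
  | qq h =>
    rcases Nat.lt_or_ge h (2*q) with hh | hh
    · apply iff_of_false
      · rintro ⟨v, hv⟩
        have hv' := congrArg Subtype.val hv
        cases v with
        | t => simp [fW, fraw] at hv'
        | b => simp [fW, fraw] at hv'
        | x j' => simp [fW, fraw] at hv'
        | y a =>
          simp only [fW, fraw] at hv'
          split_ifs at hv' <;> simp only [Raw.qq.injEq] at hv' <;> omega
      · have hch : Valid q (.qq (h+1)) := by
          simp only [Valid]; omega
        refine not_leaf_internal q hq ⟨.qq h, hr⟩ ⟨.qq (h+1), hch⟩ (by simp) (by simp) ?_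
        show rpar q (.qq (h+1)) = .qq h
        rcases h with _ | h
        · omega
        · rfl
    · have hh2 : h = 2*q := by omega
      subst hh2
      apply iff_of_true
      · refine ⟨.y ⟨q-2, by omega⟩, ?_⟩
        apply Subtype.ext
        simp only [fW, fraw]
        rw [if_pos (by omega)]
      · apply leaf_of_no_children q hq _ (by simp)
        rintro ⟨r', hr'⟩ hu hpu
        simp only at hpu hu
        cases r' with
        | main c' => rcases c' with _ | c' <;> simp [rpar] at hpu hu
        | xx j' h' =>
          simp only [Valid] at hr'
          rcases h' with _ | _ | h' <;> simp [rpar] at hpu <;> omega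
        | yy i' h' =>
          simp only [Valid] at hr'
          rcases h' with _ | _ | h' <;> simp [rpar] at hpu <;> omega
        | qq h' =>
          simp only [Valid] at hr'
          rcases h' with _ | _ | h'
          · omega
          · simp [rpar] at hpu
          · simp only [rpar, Raw.qq.injEq] at hpu
            omega
        | bb h' =>
          simp only [Valid] at hr'
          rcases h' with _ | _ | h'
          · omega
          · simp only [rpar, Raw.qq.injEq] at hpu
            omega
          · simp [rpar] at hpu
  | bb h =>
    rcases Nat.lt_or_ge h 2 with hh | hh
    · have hh1 : h = 1 := by omega
      subst hh1
      apply iff_of_false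
      · rintro ⟨v, hv⟩
        have hv' := congrArg Subtype.val hv
        cases v with
        | t => simp [fW, fraw] at hv'
        | b =>
          simp only [fW, fraw, Raw.bb.injEq] at hv'
          omega
        | x j' => simp [fW, fraw] at hv'
        | y a =>
          simp only [fW, fraw] at hv'
          split_ifs at hv' <;> simp at hv'
      · refine not_leaf_internal q hq ⟨.bb 1, hr⟩ ⟨.bb 2, by simp [Valid]⟩ (by simp) (by simp) rfl
    · have hh2 : h = 2 := by omega
      subst hh2
      apply iff_of_true
      · exact ⟨.b, rfl⟩
      · apply leaf_of_no_children q hq _ (by simp)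
        rintro ⟨r', hr'⟩ hu hpu
        simp only at hpu hu
        cases r' with
        | main c' => rcases c' with _ | c' <;> simp [rpar] at hpu hu
        | xx j' h' =>
          simp only [Valid] at hr'
          rcases h' with _ | _ | h' <;> simp [rpar] at hpu <;> omega
        | yy i' h' =>
          simp only [Valid] at hr'
          rcases h' with _ | _ | h' <;> simp [rpar] at hpu <;> omega
        | qq h' =>
          simp only [Valid] at hr'
          rcases h' with _ | _ | h' <;> simp [rpar] at hpu <;> omega
        | bb h' =>
          simp only [Valid] at hr'
          rcases h' with _ | _ | h'
          · omega
          · simp [rpar] at hpu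
          · simp only [rpar, Raw.bb.injEq] at hpu
            omega

theorem iter_xleaf (q J e m : ℕ) (he : 1 ≤ e) (hm : m ≤ q + J) :
    (rpar q)^[m + e] (.xx J e) = .main (q + J - m) := by
  obtain ⟨e', rfl⟩ : ∃ e', e = e'+1 := ⟨e-1, by omega⟩
  rw [Function.iterate_add_apply, iter_xx, iter_main' q hm]

theorem iter_yleaf (q i e m : ℕ) (he : 1 ≤ e) (hm : m ≤ q + i) :
    (rpar q)^[m + e] (.yy i e) = .main (q + i - m) := by
  obtain ⟨e', rfl⟩ : ∃ e', e = e'+1 := ⟨e-1, by omega⟩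
  rw [Function.iterate_add_apply, iter_yy, iter_main' q hm]

theorem iter_qleaf (q e m : ℕ) (he : 1 ≤ e) (hm : m ≤ 2*q) :
    (rpar q)^[m + e] (.qq e) = .main (2*q - m) := by
  obtain ⟨e', rfl⟩ : ∃ e', e = e'+1 := ⟨e-1, by omega⟩
  rw [Function.iterate_add_apply, iter_qq, iter_main' q hm]

theorem iter_qq_stay (q : ℕ) : ∀ m c, 1 ≤ c → (rpar q)^[m] (.qq (c+m)) = .qq c := by
  intro m
  induction m with
  | zero => intro c _; rfl
  | succ m ih =>
    intro c hc
    have h1 : c + (m+1) = (c + m - 1) + 2 := by omega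
    rw [h1, Function.iterate_succ_apply]
    show (rpar q)^[m] (.qq (c + m - 1 + 1)) = _
    have h2 : c + m - 1 + 1 = c + m := by omega
    rw [h2]
    exact ih c hc

theorem iter_bleaf (q m : ℕ) (hm : m ≤ 2*q) :
    (rpar q)^[m + 3] (.bb 2) = .main (2*q - m) := by
  rw [Function.iterate_add_apply, iter_bb3, iter_main' q hm]

theorem iter_bqq (q : ℕ) : (rpar q)^[2] (.bb 2) = .qq 1 := rfl

theorem dist_xt (q : ℕ) (hq : 2 ≤ q) (J e : ℕ) (he : 1 ≤ e) (hv : Valid q (.xx J e)) :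
    (R q hq).dist ⟨.xx J e, hv⟩ (rootW q) ≤ (q + J) + e := by
  apply meet_dist q hq _ _ ((q+J) + e) 0
  rw [iter_xleaf q J e (q+J) he (le_refl _)]
  simp [rootW]

theorem dist_xb (q : ℕ) (hq : 2 ≤ q) (J e : ℕ) (he : 1 ≤ e) (hJ : J ≤ q)
    (hv : Valid q (.xx J e)) (hvb : Valid q (.bb 2)) :
    (R q hq).dist ⟨.xx J e, hv⟩ ⟨.bb 2, hvb⟩ ≤ (0 + e) + ((q - J) + 3) := by
  apply meet_dist q hq _ _ (0 + e) ((q - J) + 3)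
  rw [iter_xleaf q J e 0 he (by omega), iter_bleaf q (q-J) (by omega)]
  congr 1
  omega

theorem dist_xx (q : ℕ) (hq : 2 ≤ q) (I J eI eJ : ℕ) (heI : 1 ≤ eI) (heJ : 1 ≤ eJ)
    (hIJ : I ≤ J) (hv1 : Valid q (.xx I eI)) (hv2 : Valid q (.xx J eJ)) :
    (R q hq).dist ⟨.xx I eI, hv1⟩ ⟨.xx J eJ, hv2⟩ ≤ (0 + eI) + ((J - I) + eJ) := by
  apply meet_dist q hq _ _ (0 + eI) ((J - I) + eJ)
  rw [iter_xleaf q I eI 0 heI (by omega), iter_xleaf q J eJ (J-I) heJ (by omega)]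
  congr 1
  omega

theorem dist_yx (q : ℕ) (hq : 2 ≤ q) (i J e : ℕ) (he : 1 ≤ e) (hiJ : i ≤ J)
    (hv1 : Valid q (.yy i (q+i))) (hv2 : Valid q (.xx J e)) :
    (R q hq).dist ⟨.yy i (q+i), hv1⟩ ⟨.xx J e, hv2⟩ ≤ (0 + (q+i)) + ((J - i) + e) := by
  apply meet_dist q hq _ _ (0 + (q+i)) ((J - i) + e)
  rw [iter_yleaf q i (q+i) 0 (by omega) (by omega), iter_xleaf q J e (J-i) he (by omega)]
  congr 1
  omega

theorem dist_qx (q : ℕ) (hq : 2 ≤ q) (J e : ℕ) (he : 1 ≤ e) (hJ : J = q)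
    (hv1 : Valid q (.qq (2*q))) (hv2 : Valid q (.xx J e)) :
    (R q hq).dist ⟨.qq (2*q), hv1⟩ ⟨.xx J e, hv2⟩ ≤ 2*q + e := by
  have h1 : (R q hq).dist ⟨.qq (2*q), hv1⟩ ⟨.xx J e, hv2⟩ ≤ (0 + 2*q) + (0 + e) := by
    apply meet_dist q hq _ _ (0 + 2*q) (0 + e)
    rw [iter_qleaf q (2*q) 0 (by omega) (by omega), iter_xleaf q J e 0 he (by omega)]
    congr 1
    omega
  omega

theorem dist_bq (q : ℕ) (hq : 2 ≤ q) (hv1 : Valid q (.bb 2)) (hv2 : Valid q (.qq (2*q))) :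
    (R q hq).dist ⟨.bb 2, hv1⟩ ⟨.qq (2*q), hv2⟩ ≤ 2 + (2*q - 1) := by
  apply meet_dist q hq _ _ 2 (2*q - 1)
  rw [iter_bqq]
  show _ = (rpar q)^[2*q-1] (.qq (2*q))
  have h1 : (Raw.qq (2*q)) = .qq (1 + (2*q - 1)) := by
    congr 1
    omega
  rw [h1, iter_qq_stay q (2*q-1) 1 (le_refl _)]

theorem ge_t (q : ℕ) (hq : 2 ≤ q) (u : W q) :
    dep q u.1 ≤ (R q hq).dist u (rootW q) :=
  dist_ge_pot q hq (dep q) (dT_step q hq) u (rootW q) rfl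

theorem ge_b (q : ℕ) (hq : 2 ≤ q) (u : W q) (hvb : Valid q (.bb 2)) :
    dB q u.1 ≤ (R q hq).dist u ⟨.bb 2, hvb⟩ :=
  dist_ge_pot q hq (dB q) (dB_step q hq) u _ rfl

theorem ge_yq (q : ℕ) (hq : 2 ≤ q) (u : W q) (hv : Valid q (.qq (2*q))) :
    dYq q u.1 ≤ (R q hq).dist u ⟨.qq (2*q), hv⟩ :=
  dist_ge_pot q hq (dYq q) (dYq_step q hq) u _ (by simp [dYq])

theorem ge_y (q : ℕ) (hq : 2 ≤ q) (i : ℕ) (hi : i ≤ q) (u : W q)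
    (hv : Valid q (.yy i (q+i))) :
    dY q i u.1 ≤ (R q hq).dist u ⟨.yy i (q+i), hv⟩ :=
  dist_ge_pot q hq (dY q i) (dY_step q hq i hi) u _ (by simp [dY])

theorem ell_val1 (q : ℕ) : ell q 1 = q - 1 := by simp [ell]

theorem ell_val2 (q J : ℕ) (h : 2 ≤ J) : ell q J = q + 1 - J := by
  rw [ell, if_neg (by omega)]

theorem fW_t (q : ℕ) (hq : 2 ≤ q) : fW q hq .t = rootW q := rfl

theorem fW_y_qq (q : ℕ) (hq : 2 ≤ q) (a : Fin (q-1)) (ha : a.1 + 2 = q)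
    (hv : Valid q (.qq (2*q))) : fW q hq (.y a) = ⟨.qq (2*q), hv⟩ := by
  apply Subtype.ext
  simp [fW, fraw, ha]

theorem fW_y_yy (q : ℕ) (hq : 2 ≤ q) (a : Fin (q-1)) (ha : ¬ a.1 + 2 = q)
    (hv : Valid q (.yy (a.1+2) (q+(a.1+2)))) : fW q hq (.y a) = ⟨.yy (a.1+2) (q+(a.1+2)), hv⟩ := by
  apply Subtype.ext
  simp [fW, fraw, ha]

theorem yy_valid (q : ℕ) (hq : 2 ≤ q) (a : Fin (q-1)) (ha : ¬ a.1 + 2 = q) :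
    Valid q (.yy (a.1+2) (q+(a.1+2))) := by
  have := a.2
  simp only [Valid]
  omega

theorem qq_valid (q : ℕ) (hq : 2 ≤ q) : Valid q (.qq (2*q)) := by
  simp only [Valid]; omega

theorem bb_valid (q : ℕ) (hq : 2 ≤ q) : Valid q (.bb 2) := by
  simp only [Valid]; omega

theorem fW_b (q : ℕ) (hq : 2 ≤ q) : fW q hq .b = ⟨.bb 2, bb_valid q hq⟩ := rfl

theorem xx_valid (q : ℕ) (hq : 2 ≤ q) (c : Fin q) :
    Valid q (.xx (c.1+1) (ell q (c.1+1))) := fraw_valid q hq (.x c)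

theorem fW_x (q : ℕ) (hq : 2 ≤ q) (c : Fin q) :
    fW q hq (.x c) = ⟨.xx (c.1+1) (ell q (c.1+1)), xx_valid q hq c⟩ := rfl

theorem ell_bounds (q : ℕ) (hq : 2 ≤ q) (c : Fin q) :
    1 ≤ ell q (c.1+1) ∧ ell q (c.1+1) ≤ q - 1 := ell_pos hq (by omega) (by omega)


@[simp] theorem coe_mk {q : ℕ} (r : Raw) (h : Valid q r) :
    (Subtype.val (⟨r, h⟩ : W q)) = r := rfl

theorem ell_cases (q J : ℕ) (hq : 2 ≤ q) (hJ1 : 1 ≤ J) (hJq : J ≤ q) :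
    (J = 1 ∧ ell q J = q - 1) ∨ (2 ≤ J ∧ ell q J = q + 1 - J) := by
  rcases Nat.eq_or_lt_of_le hJ1 with h | h
  · exact Or.inl ⟨h.symm, by rw [← h, ell_val1]⟩
  · exact Or.inr ⟨h, ell_val2 q J h⟩

section Bounds
variable (q : ℕ) (hq : 2 ≤ q)

include hq in
theorem ellc (c : Fin q) :
    ((c.1+1) = 1 ∧ ell q (c.1+1) = q - 1) ∨ (2 ≤ (c.1+1) ∧ ell q (c.1+1) = q + 1 - (c.1+1)) :=
  ell_cases q (c.1+1) hq (by omega) (by have := c.2; omega)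

theorem tx_le (c : Fin q) : (R q hq).dist (fW q hq .t) (fW q hq (.x c)) ≤ 2*q+1 := by
  rw [fW_t, SimpleGraph.dist_comm, fW_x]
  have h1 := dist_xt q hq (c.1+1) (ell q (c.1+1)) (ell_bounds q hq c).1 (xx_valid q hq c)
  refine h1.trans ?_
  rcases ellc q hq c with ⟨h, he⟩ | ⟨h, he⟩ <;> omega

theorem tx0_le (c : Fin q) (hc : c.1 = 0) :
    (R q hq).dist (fW q hq (.x c)) (fW q hq .t) ≤ 2*q := by
  rw [fW_t, fW_x]
  have h1 := dist_xt q hq (c.1+1) (ell q (c.1+1)) (ell_bounds q hq c).1 (xx_valid q hq c)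
  refine h1.trans ?_
  rcases ellc q hq c with ⟨h, he⟩ | ⟨h, he⟩ <;> omega

theorem ut_ge (u : IVert q) (hu : u ≠ .t) :
    2*q ≤ (R q hq).dist (fW q hq u) (fW q hq .t) := by
  rw [fW_t]
  refine le_trans ?_ (ge_t q hq (fW q hq u))
  cases u with
  | t => exact absurd rfl hu
  | b => rw [fW_b]; simp only [coe_mk, dep]; omega
  | x c =>
    rw [fW_x]
    simp only [coe_mk, dep]
    rcases ellc q hq c with ⟨h, he⟩ | ⟨h, he⟩ <;> omega
  | y a =>
    by_cases ha : a.1 + 2 = q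
    · rw [fW_y_qq q hq a ha (qq_valid q hq)]
      simp only [coe_mk, dep]
      omega
    · rw [fW_y_yy q hq a ha (yy_valid q hq a ha)]
      simp only [coe_mk, dep]
      omega

theorem tx1_eq (c : Fin q) (hc : c.1 = 0) :
    (R q hq).dist (fW q hq (.x c)) (fW q hq .t) = 2*q := by
  refine le_antisymm (tx0_le q hq c hc) (ut_ge q hq (.x c) (by simp))

theorem tb_ge : 2*q+3 ≤ (R q hq).dist (fW q hq .t) (fW q hq .b) := by
  rw [SimpleGraph.dist_comm, fW_t]
  refine le_trans ?_ (ge_t q hq (fW q hq .b))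
  rw [fW_b]
  simp only [coe_mk, dep]
  omega

theorem ty_ge (a : Fin (q-1)) : 2*q+2 ≤ (R q hq).dist (fW q hq .t) (fW q hq (.y a)) := by
  rw [SimpleGraph.dist_comm, fW_t]
  refine le_trans ?_ (ge_t q hq (fW q hq (.y a)))
  by_cases ha : a.1 + 2 = q
  · rw [fW_y_qq q hq a ha (qq_valid q hq)]
    simp only [coe_mk, dep]
    omega
  · rw [fW_y_yy q hq a ha (yy_valid q hq a ha)]
    simp only [coe_mk, dep]
    omega

theorem bx_le (c : Fin q) : (R q hq).dist (fW q hq .b) (fW q hq (.x c)) ≤ 2*q+1 := by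
  rw [SimpleGraph.dist_comm, fW_x, fW_b]
  have h1 := dist_xb q hq (c.1+1) (ell q (c.1+1)) (ell_bounds q hq c).1 (by have := c.2; omega)
    (xx_valid q hq c) (bb_valid q hq)
  refine h1.trans ?_
  rcases ellc q hq c with ⟨h, he⟩ | ⟨h, he⟩ <;> (have := c.2; omega)

theorem bxq_le (c : Fin q) (hc : c.1 + 1 = q) :
    (R q hq).dist (fW q hq (.x c)) (fW q hq .b) ≤ 4 := by
  rw [fW_x, fW_b]
  have h1 := dist_xb q hq (c.1+1) (ell q (c.1+1)) (ell_bounds q hq c).1 (by omega)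
    (xx_valid q hq c) (bb_valid q hq)
  refine h1.trans ?_
  rcases ellc q hq c with ⟨h, he⟩ | ⟨h, he⟩ <;> omega

theorem ub_ge (u : IVert q) (hu : u ≠ .b) : 4 ≤ (R q hq).dist (fW q hq u) (fW q hq .b) := by
  rw [fW_b]
  refine le_trans ?_ (ge_b q hq (fW q hq u) (bb_valid q hq))
  cases u with
  | b => exact absurd rfl hu
  | t =>
    rw [fW_t]
    show 4 ≤ dB q (Raw.main 0)
    simp only [dB]
    omega
  | x c =>
    rw [fW_x]
    simp only [coe_mk, dB]
    rcases ellc q hq c with ⟨h, he⟩ | ⟨h, he⟩ <;> omega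
  | y a =>
    by_cases ha : a.1 + 2 = q
    · rw [fW_y_qq q hq a ha (qq_valid q hq)]
      simp only [coe_mk, dB]
      omega
    · rw [fW_y_yy q hq a ha (yy_valid q hq a ha)]
      simp only [coe_mk, dB]
      omega

theorem bxq_eq (c : Fin q) (hc : c.1 + 1 = q) :
    (R q hq).dist (fW q hq (.x c)) (fW q hq .b) = 4 :=
  le_antisymm (bxq_le q hq c hc) (ub_ge q hq (.x c) (by simp))

theorem by_ge (a : Fin (q-1)) (ha : ¬ a.1 + 2 = q) :
    2*q+2 ≤ (R q hq).dist (fW q hq .b) (fW q hq (.y a)) := by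
  rw [SimpleGraph.dist_comm, fW_b]
  refine le_trans ?_ (ge_b q hq (fW q hq (.y a)) (bb_valid q hq))
  rw [fW_y_yy q hq a ha (yy_valid q hq a ha)]
  simp only [coe_mk, dB]
  omega

theorem bq_le (a : Fin (q-1)) (ha : a.1 + 2 = q) :
    (R q hq).dist (fW q hq .b) (fW q hq (.y a)) ≤ 2*q+1 := by
  rw [fW_y_qq q hq a ha (qq_valid q hq), fW_b]
  refine (dist_bq q hq (bb_valid q hq) (qq_valid q hq)).trans ?_
  omega

theorem xx_le (c d : Fin q) (hcd : c.1 < d.1) :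
    (R q hq).dist (fW q hq (.x c)) (fW q hq (.x d)) ≤ 2*q+1 := by
  rw [fW_x, fW_x]
  have h1 := dist_xx q hq (c.1+1) (d.1+1) (ell q (c.1+1)) (ell q (d.1+1))
    (ell_bounds q hq c).1 (ell_bounds q hq d).1 (by omega) (xx_valid q hq c) (xx_valid q hq d)
  refine h1.trans ?_
  rcases ellc q hq c with ⟨h, he⟩ | ⟨h, he⟩ <;>
    rcases ellc q hq d with ⟨h', he'⟩ | ⟨h', he'⟩ <;> omega

theorem yx_le (a : Fin (q-1)) (c : Fin q) (hac : a.1 + 1 ≤ c.1) :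
    (R q hq).dist (fW q hq (.y a)) (fW q hq (.x c)) ≤ 2*q+1 := by
  have hc2 : 2 ≤ c.1 + 1 := by omega
  have hell : ell q (c.1+1) = q + 1 - (c.1+1) := ell_val2 q _ hc2
  by_cases ha : a.1 + 2 = q
  · have hcq : c.1 + 1 = q := by
      have := c.2
      omega
    rw [fW_y_qq q hq a ha (qq_valid q hq), fW_x]
    have h1 := dist_qx q hq (c.1+1) (ell q (c.1+1)) (ell_bounds q hq c).1 hcq
      (qq_valid q hq) (xx_valid q hq c)
    refine h1.trans ?_
    omega
  · rw [fW_y_yy q hq a ha (yy_valid q hq a ha), fW_x]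
    have h1 := dist_yx q hq (a.1+2) (c.1+1) (ell q (c.1+1)) (ell_bounds q hq c).1 (by omega)
      (yy_valid q hq a ha) (xx_valid q hq c)
    refine h1.trans ?_
    have := c.2
    omega

theorem yx_ge (a : Fin (q-1)) (c : Fin q) (hac : c.1 < a.1 + 1) :
    2*q+2 ≤ (R q hq).dist (fW q hq (.y a)) (fW q hq (.x c)) := by
  rw [SimpleGraph.dist_comm]
  have ha2 := a.2
  by_cases ha : a.1 + 2 = q
  · rw [fW_y_qq q hq a ha (qq_valid q hq)]
    refine le_trans ?_ (ge_yq q hq (fW q hq (.x c)) (qq_valid q hq))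
    rw [fW_x]
    simp only [coe_mk, dYq]
    rcases ellc q hq c with ⟨h, he⟩ | ⟨h, he⟩ <;> omega
  · rw [fW_y_yy q hq a ha (yy_valid q hq a ha)]
    refine le_trans ?_ (ge_y q hq (a.1+2) (by omega) (fW q hq (.x c)) (yy_valid q hq a ha))
    rw [fW_x]
    simp only [coe_mk, dY]
    rcases ellc q hq c with ⟨h, he⟩ | ⟨h, he⟩ <;> omega

theorem yy_ge (a a' : Fin (q-1)) (hne : a.1 ≠ a'.1) :
    2*q+2 ≤ (R q hq).dist (fW q hq (.y a)) (fW q hq (.y a')) := by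
  have ha2 := a.2
  have ha2' := a'.2
  by_cases ha' : a'.1 + 2 = q
  · rw [fW_y_qq q hq a' ha' (qq_valid q hq)]
    refine le_trans ?_ (ge_yq q hq (fW q hq (.y a)) (qq_valid q hq))
    have ha : ¬ a.1 + 2 = q := by omega
    rw [fW_y_yy q hq a ha (yy_valid q hq a ha)]
    simp only [coe_mk, dYq]
    omega
  · rw [fW_y_yy q hq a' ha' (yy_valid q hq a' ha')]
    refine le_trans ?_ (ge_y q hq (a'.1+2) (by omega) (fW q hq (.y a)) (yy_valid q hq a' ha'))
    by_cases ha : a.1 + 2 = q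
    · rw [fW_y_qq q hq a ha (qq_valid q hq)]
      simp only [coe_mk, dY]
      omega
    · rw [fW_y_yy q hq a ha (yy_valid q hq a ha)]
      simp only [coe_mk, dY]
      rw [if_neg (by omega)]
      omega

end Bounds

theorem main_adj (q : ℕ) (hq : 2 ≤ q) (u v : IVert q) (huv : u ≠ v) :
    (oddGadget q).Adj u v ↔ (R q hq).dist (fW q hq u) (fW q hq v) ≤ 2*q+1 := by
  cases u with
  | t =>
    cases v with
    | t => exact absurd rfl huv
    | b =>
      apply iff_of_false
      · simp [oddGadget]
      · have := tb_ge q hq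
        omega
    | x c =>
      exact iff_of_true (by simp [oddGadget]) (tx_le q hq c)
    | y a =>
      apply iff_of_false
      · simp [oddGadget]
      · have := ty_ge q hq a
        omega
  | b =>
    cases v with
    | t =>
      apply iff_of_false
      · simp [oddGadget]
      · have := tb_ge q hq
        rw [SimpleGraph.dist_comm] at this
        omega
    | b => exact absurd rfl huv
    | x c =>
      exact iff_of_true (by simp [oddGadget]) (bx_le q hq c)
    | y a =>
      by_cases ha : (a : ℕ) = q - 2
      · have ha' : a.1 + 2 = q := by have := a.2; omega
        exact iff_of_true (by simp [oddGadget, ha]) (bq_le q hq a ha')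
      · have ha' : ¬ a.1 + 2 = q := by have := a.2; omega
        apply iff_of_false
        · simp [oddGadget, ha]
        · have := by_ge q hq a ha'
          omega
  | x c =>
    cases v with
    | t =>
      refine iff_of_true (by simp [oddGadget]) ?_
      have := tx_le q hq c
      rwa [SimpleGraph.dist_comm] at this
    | b =>
      refine iff_of_true (by simp [oddGadget]) ?_
      have := bx_le q hq c
      rwa [SimpleGraph.dist_comm] at this
    | x d =>
      have hne : c ≠ d := by rintro rfl; exact huv rfl
      refine iff_of_true (by simp [oddGadget, hne]) ?_
      rcases Nat.lt_or_ge c.1 d.1 with h | h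
      · exact xx_le q hq c d h
      · have : d.1 < c.1 := by
          rcases Nat.eq_or_lt_of_le h with h' | h'
          · exact absurd (Fin.ext h'.symm) hne
          · exact h'
        rw [SimpleGraph.dist_comm]
        exact xx_le q hq d c this
    | y a =>
      by_cases hedge : (a : ℕ) + 1 ≤ (c : ℕ)
      · refine iff_of_true (by simp [oddGadget, hedge]; omega) ?_
        have := yx_le q hq a c hedge
        rwa [SimpleGraph.dist_comm] at this
      · apply iff_of_false
        · simp [oddGadget, hedge]; omega
        · have := yx_ge q hq a c (by omega)
          rw [SimpleGraph.dist_comm] at this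
          omega
  | y a =>
    cases v with
    | t =>
      apply iff_of_false
      · simp [oddGadget]
      · have := ty_ge q hq a
        rw [SimpleGraph.dist_comm] at this
        omega
    | b =>
      by_cases ha : (a : ℕ) = q - 2
      · have ha' : a.1 + 2 = q := by have := a.2; omega
        refine iff_of_true (by simp [oddGadget, ha]) ?_
        have := bq_le q hq a ha'
        rwa [SimpleGraph.dist_comm] at this
      · have ha' : ¬ a.1 + 2 = q := by have := a.2; omega
        apply iff_of_false
        · simp [oddGadget, ha]
        · have := by_ge q hq a ha'
          rw [SimpleGraph.dist_comm] at this
          omega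
    | x c =>
      by_cases hedge : (a : ℕ) + 1 ≤ (c : ℕ)
      · exact iff_of_true (by simp [oddGadget, hedge]; omega) (yx_le q hq a c hedge)
      · apply iff_of_false
        · simp [oddGadget, hedge]; omega
        · have := yx_ge q hq a c (by omega)
          omega
    | y a' =>
      have hne : a.1 ≠ a'.1 := by
        intro h
        exact huv (congrArg IVert.y (Fin.ext h))
      apply iff_of_false
      · simp [oddGadget]
      · have := yy_ge q hq a a' hne
        omega

theorem mval_t (q : ℕ) (hq : 2 ≤ q) : mval (R q hq) (fW q hq) IVert.t = 2*q := by
  have hz : (0:ℕ) < q := by omega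
  have hmem : 2*q ∈ {d | ∃ u, u ≠ IVert.t ∧ (R q hq).dist (fW q hq u) (fW q hq IVert.t) = d} :=
    ⟨.x ⟨0, hz⟩, by simp, tx1_eq q hq ⟨0, hz⟩ rfl⟩
  refine le_antisymm (Nat.sInf_le hmem) (le_csInf ⟨_, hmem⟩ ?_)
  rintro d ⟨u, hu, rfl⟩
  exact ut_ge q hq u hu

theorem mval_b (q : ℕ) (hq : 2 ≤ q) : mval (R q hq) (fW q hq) IVert.b = 4 := by
  have hz : q - 1 < q := by omega
  have hcq : (⟨q-1, hz⟩ : Fin q).1 + 1 = q := by simp; omega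
  have hmem : 4 ∈ {d | ∃ u, u ≠ IVert.b ∧ (R q hq).dist (fW q hq u) (fW q hq IVert.b) = d} :=
    ⟨.x ⟨q-1, hz⟩, by simp, bxq_eq q hq ⟨q-1, hz⟩ hcq⟩
  refine le_antisymm (Nat.sInf_le hmem) (le_csInf ⟨_, hmem⟩ ?_)
  rintro d ⟨u, hu, rfl⟩
  exact ub_ge q hq u hu

end Gadget

theorem odd_gadget_root_R (q : ℕ) (hq : 2 ≤ q) (k : ℕ) (hk : k = 2 * q + 1) :
    ∃ (W : Type) (R : SimpleGraph W) (f : IVert q → W),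
      IsLeafRoot (oddGadget q) k R f ∧
      mval R f IVert.t = k - 1 ∧ mval R f IVert.b = 4 := by
  subst hk
  refine ⟨Gadget.W q, Gadget.R q hq, Gadget.fW q hq,
    ⟨Gadget.W_finite q hq, Gadget.R_isTree q hq, Gadget.fW_inj q hq,
      Gadget.leaf_iff q hq, ?_⟩, ?_, ?_⟩
  · intro u v huv
    exact Gadget.main_adj q hq u v huv
  · rw [Gadget.mval_t q hq]
    omega
  · exact Gadget.mval_b q hq
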